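/- Suppose a₁, a₂ are positive integers and h₁, h₂ ∈ {1,2,3,6} with a₁·h₁ = 12 and a₂·h₂ ∈ {6, 18, 24, 36, ...} \ {12} (i.e., a₂·h₂ is a positive multiple of 6 different from 12). Then for all n ≥ 54, setting M(a,h) := (1 - 2ah/(2π√(24n-1)))·exp(2π√(24n-1)/(2ah)), one has |M(a₁,h₁) - M(a₂,h₂)| > 2·1334.42. -/

import Mathlib

open Real

/-- Main term magnitude `M(n; a, h)` from the proof of the main theorem. -/
noncomputable def mainTerm (n a h : ℕ) : ℝ :=
  (1 - 2 * a * h / (2 * π * Real.sqrt (24 * n - 1))) *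
    Real.exp (2 * π * Real.sqrt (24 * n - 1) / (2 * a * h))

set_option maxHeartbeats 1000000 in
theorem mainTerm_separation (n a₁ h₁ a₂ h₂ : ℕ) (hn : 54 ≤ n)
    (ha₁ : 0 < a₁) (ha₂ : 0 < a₂)
    (hh₁ : h₁ ∈ ({1, 2, 3, 6} : Set ℕ)) (hh₂ : h₂ ∈ ({1, 2, 3, 6} : Set ℕ))
    (h12 : a₁ * h₁ = 12) (hdvd : 6 ∣ a₂ * h₂) (hne : a₂ * h₂ ≠ 12) :
    2 * 1334.42 < |mainTerm n a₁ h₁ - mainTerm n a₂ h₂| := by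
  have hπ : (3.14 : ℝ) < π := by linarith [pi_gt_d6]
  set R : ℝ := Real.sqrt (24 * n - 1) with hR
  have hn' : (1295 : ℝ) ≤ 24 * (n : ℝ) - 1 := by
    have : (54:ℝ) ≤ (n:ℝ) := by exact_mod_cast hn
    linarith
  have hR2 : (35.9 : ℝ) ≤ R := by
    rw [hR, show (35.9:ℝ) = Real.sqrt (35.9^2) from (Real.sqrt_sq (by norm_num)).symm]
    exact Real.sqrt_le_sqrt (by linarith)
  set x : ℝ := 2 * π * R with hxdef
  have hx : (225.4 : ℝ) ≤ x := by
    have : (2:ℝ) * 3.14 * 35.9 ≤ 2 * π * R := by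
      apply mul_le_mul (by linarith) hR2 (by norm_num) (by positivity)
    linarith
  have hxpos : (0:ℝ) < x := by linarith
  -- exponential bounds
  have he : (2.718 : ℝ) ≤ Real.exp 1 := by linarith [Real.exp_one_gt_d9]
  have hE72 : (20 : ℝ) ≤ Real.exp (x / 72) := by
    have h3 : (3:ℝ) ≤ x / 72 := by linarith [hx]; 
    calc (20:ℝ) ≤ (2.718)^3 := by norm_num
      _ ≤ (Real.exp 1)^3 := pow_le_pow_left₀ (by norm_num) he 3
      _ = Real.exp 3 := by rw [← Real.exp_nat_mul]; norm_num
      _ ≤ Real.exp (x/72) := Real.exp_le_exp.mpr h3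
  have hE36 : (400 : ℝ) ≤ Real.exp (x / 36) := by
    have h6 : (6:ℝ) ≤ x / 36 := by linarith [hx]
    calc (400:ℝ) ≤ (2.718)^6 := by norm_num
      _ ≤ (Real.exp 1)^6 := pow_le_pow_left₀ (by norm_num) he 6
      _ = Real.exp 6 := by rw [← Real.exp_nat_mul]; norm_num
      _ ≤ Real.exp (x/36) := Real.exp_le_exp.mpr h6
  have hE24 : (8000 : ℝ) ≤ Real.exp (x / 24) := by
    have h9 : (9:ℝ) ≤ x / 24 := by linarith [hx]
    calc (8000:ℝ) ≤ (2.718)^9 := by norm_num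
      _ ≤ (Real.exp 1)^9 := pow_le_pow_left₀ (by norm_num) he 9
      _ = Real.exp 9 := by rw [← Real.exp_nat_mul]; norm_num
      _ ≤ Real.exp (x/24) := Real.exp_le_exp.mpr h9
  -- M₁ in closed form
  have h12' : (2:ℝ) * (a₁:ℝ) * (h₁:ℝ) = 24 := by
    have : ((a₁ * h₁ : ℕ) : ℝ) = 12 := by exact_mod_cast congrArg (Nat.cast : ℕ → ℝ) h12
    push_cast at this; linarith
  have hM1 : mainTerm n a₁ h₁ = (1 - 24 / x) * Real.exp (x / 24) := by
    rw [mainTerm, h12']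
  have h24x : 24 / x ≤ 0.11 := by
    rw [div_le_iff₀ hxpos]; linarith
  have h24x0 : (0:ℝ) ≤ 1 - 24 / x := by linarith
  have hM1lb : 0.89 * Real.exp (x/24) ≤ mainTerm n a₁ h₁ := by
    rw [hM1]
    exact mul_le_mul_of_nonneg_right (by linarith) (Real.exp_pos _).le
  have hM1ub : mainTerm n a₁ h₁ ≤ Real.exp (x/24) := by
    rw [hM1]
    have h0 : (0:ℝ) ≤ 24 / x := by positivity
    calc (1 - 24 / x) * Real.exp (x/24) ≤ 1 * Real.exp (x/24) :=
          mul_le_mul_of_nonneg_right (by linarith) (Real.exp_pos _).le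
      _ = Real.exp (x/24) := one_mul _
  -- split on a₂ * h₂
  set m : ℕ := a₂ * h₂ with hm
  have hmpos : 0 < m := Nat.mul_pos ha₂ (by
    rcases hh₂ with h | h | h | h <;> simp_all)
  obtain ⟨k, hk⟩ := hdvd
  have hs' : (2:ℝ) * (a₂:ℝ) * (h₂:ℝ) = 2 * (m:ℝ) := by
    push_cast [hm]; ring
  have hM2 : mainTerm n a₂ h₂ = (1 - 2 * (m:ℝ) / x) * Real.exp (x / (2 * (m:ℝ))) := by
    rw [mainTerm, hs']
  rcases eq_or_ne m 6 with h6 | h6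
  · -- a₂h₂ = 6 : M₂ huge, M₂ - M₁ large
    have hM2' : mainTerm n a₂ h₂ = (1 - 12 / x) * Real.exp (x / 12) := by
      rw [hM2, h6]; norm_num
    have h12x : 12 / x ≤ 0.06 := by rw [div_le_iff₀ hxpos]; linarith
    have hsplit : Real.exp (x/12) = Real.exp (x/24) * Real.exp (x/24) := by
      rw [← Real.exp_add]; ring_nf
    have hbig : 2 * 1334.42 < mainTerm n a₂ h₂ - mainTerm n a₁ h₁ := by
      rw [hM2', hsplit]
      set E := Real.exp (x/24) with hE
      have hEpos : (0:ℝ) < E := Real.exp_pos _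
      have key1 : 0.94 * (E * E) ≤ (1 - 12 / x) * (E * E) :=
        mul_le_mul_of_nonneg_right (by linarith) (by positivity)
      have key2 : 8000 * E ≤ E * E :=
        mul_le_mul_of_nonneg_right hE24 hEpos.le
      linarith [hM1ub, hE24]
    rw [abs_sub_comm]
    calc (2:ℝ) * 1334.42 < mainTerm n a₂ h₂ - mainTerm n a₁ h₁ := hbig
      _ ≤ |mainTerm n a₂ h₂ - mainTerm n a₁ h₁| := le_abs_self _
  · -- a₂h₂ ≥ 18
    have hm18 : 18 ≤ m := by
      rcases k with _ | _ | _ | k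
      · omega
      · omega
      · omega
      · omega
    have hmr : (18:ℝ) ≤ (m:ℝ) := by exact_mod_cast hm18
    have hM2ub : mainTerm n a₂ h₂ ≤ Real.exp (x/36) := by
      rw [hM2]
      rcases le_or_gt (1 - 2 * (m:ℝ) / x) 0 with hneg | hpos
      · have h0 : (1 - 2 * (m:ℝ) / x) * Real.exp (x / (2*(m:ℝ))) ≤ 0 :=
          mul_nonpos_of_nonpos_of_nonneg hneg (Real.exp_pos _).le
        linarith [Real.exp_pos (x/36)]
      · have h1 : Real.exp (x / (2*(m:ℝ))) ≤ Real.exp (x/36) := by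
          apply Real.exp_le_exp.mpr
          gcongr <;> linarith
        have h2 : (2:ℝ) * (m:ℝ) / x ≥ 0 := by positivity
        calc (1 - 2 * (m:ℝ) / x) * Real.exp (x / (2*(m:ℝ)))
            ≤ 1 * Real.exp (x/36) :=
              mul_le_mul (by linarith) h1 (Real.exp_pos _).le (by norm_num)
          _ = Real.exp (x/36) := one_mul _
    have hsplit : Real.exp (x/24) = Real.exp (x/36) * Real.exp (x/72) := by
      rw [← Real.exp_add]; ring_nf
    have hbig : 2 * 1334.42 < mainTerm n a₁ h₁ - mainTerm n a₂ h₂ := by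
      have h1 : 0.89 * (Real.exp (x/36) * Real.exp (x/72)) ≤ mainTerm n a₁ h₁ := by
        rw [← hsplit]; exact hM1lb
      have hfac : (15:ℝ) ≤ 0.89 * Real.exp (x/72) - 1 := by linarith
      have key : (400:ℝ) * 15 ≤ Real.exp (x/36) * (0.89 * Real.exp (x/72) - 1) :=
        mul_le_mul hE36 hfac (by norm_num) (by positivity)
      nlinarith [hM2ub, h1, key]
    calc (2:ℝ) * 1334.42 < mainTerm n a₁ h₁ - mainTerm n a₂ h₂ := hbig
      _ ≤ |mainTerm n a₁ h₁ - mainTerm n a₂ h₂| := le_abs_self _
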